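/- Fix η ∈ (0,1) and α ∈ (0,1). Define ξ(β) = (1−β)·√(2/π)·exp(−(erfinv((1−α)/(1−β)))²) / ((α−ηβ)·√2·erfinv((1−α)/(1−β))) for β ∈ (0, α). Then ξ is strictly decreasing on (0, α). -/

import Mathlib

open Real MeasureTheory Filter Set

noncomputable def erf (y : ℝ) : ℝ := (2 / Real.sqrt π) * ∫ t in (0:ℝ)..y, Real.exp (-t ^ 2)

noncomputable def erfc (y : ℝ) : ℝ := (2 / Real.sqrt π) * ∫ t in Set.Ioi y, Real.exp (-t ^ 2)

noncomputable def erfinv : ℝ → ℝ := Function.invFun erf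

lemma gauss_cont : Continuous fun t : ℝ => Real.exp (-t ^ 2) := by continuity

lemma gauss_integrableOn (s : Set ℝ) : IntegrableOn (fun t : ℝ => Real.exp (-t ^ 2)) s := by
  have h : Integrable (fun t : ℝ => Real.exp (-1 * t ^ 2)) := integrable_exp_neg_mul_sq one_pos
  simpa using h.integrableOn

lemma c_pos : (0:ℝ) < 2 / Real.sqrt π := by
  have := Real.sqrt_pos.mpr Real.pi_pos; positivity

lemma erf_zero : erf 0 = 0 := by simp [erf]

lemma hasDerivAt_erf (y : ℝ) :
    HasDerivAt erf (2 / Real.sqrt π * Real.exp (-y ^ 2)) y := by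
  have h := (gauss_cont.integral_hasStrictDerivAt 0 y).hasDerivAt
  exact h.const_mul (2 / Real.sqrt π)

lemma erf_strictMono : StrictMono erf := by
  intro a b hab
  have h : 0 < ∫ t in a..b, Real.exp (-t ^ 2) :=
    intervalIntegral.intervalIntegral_pos_of_pos (gauss_cont.intervalIntegrable a b)
      (fun x => Real.exp_pos _) hab
  have hsub : erf b - erf a = (2 / Real.sqrt π) * ∫ t in a..b, Real.exp (-t ^ 2) := by
    rw [erf, erf, ← mul_sub,
      intervalIntegral.integral_interval_sub_left (gauss_cont.intervalIntegrable 0 b)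
        (gauss_cont.intervalIntegrable 0 a)]
  nlinarith [mul_pos c_pos h]

lemma total_integral : (∫ t in Set.Ioi (0:ℝ), Real.exp (-t ^ 2)) = Real.sqrt π / 2 := by
  have h := integral_gaussian_Ioi 1
  simpa using h

lemma split_integral (y : ℝ) :
    (∫ t in (0:ℝ)..y, Real.exp (-t ^ 2)) + ∫ t in Set.Ioi y, Real.exp (-t ^ 2)
      = Real.sqrt π / 2 := by
  rcases le_or_gt 0 y with hy | hy
  · have hu : Set.Ioc 0 y ∪ Set.Ioi y = Set.Ioi (0:ℝ) := Set.Ioc_union_Ioi_eq_Ioi hy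
    have hd : Disjoint (Set.Ioc 0 y) (Set.Ioi y) := by simp [Set.disjoint_left]
    have := MeasureTheory.setIntegral_union hd measurableSet_Ioi
      (gauss_integrableOn (Set.Ioc 0 y)) (gauss_integrableOn (Set.Ioi y))
      (f := fun t : ℝ => Real.exp (-t ^ 2)) (μ := volume)
    rw [hu] at this
    rw [intervalIntegral.integral_of_le hy, ← total_integral, this]
  · have hu : Set.Ioc y 0 ∪ Set.Ioi 0 = Set.Ioi y := Set.Ioc_union_Ioi_eq_Ioi hy.le
    have hd : Disjoint (Set.Ioc y 0) (Set.Ioi 0) := by simp [Set.disjoint_left]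
    have hsplit := MeasureTheory.setIntegral_union hd measurableSet_Ioi
      (gauss_integrableOn (Set.Ioc y 0)) (gauss_integrableOn (Set.Ioi 0))
      (f := fun t : ℝ => Real.exp (-t ^ 2)) (μ := volume)
    rw [hu] at hsplit
    rw [intervalIntegral.integral_symm, intervalIntegral.integral_of_le hy.le, hsplit,
      total_integral]
    ring

lemma tail_pos (y : ℝ) : 0 < ∫ t in Set.Ioi y, Real.exp (-t ^ 2) := by
  rw [MeasureTheory.setIntegral_pos_iff_support_of_nonneg_ae]
  · have : (Function.support fun t : ℝ => Real.exp (-t ^ 2)) = Set.univ := by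
      ext t; simp [Function.support, Real.exp_ne_zero]
    rw [this, Set.univ_inter]
    simp
  · filter_upwards with t using (Real.exp_pos _).le
  · exact gauss_integrableOn _

lemma one_sub_erf (y : ℝ) :
    1 - erf y = (2 / Real.sqrt π) * ∫ t in Set.Ioi y, Real.exp (-t ^ 2) := by
  have hs := split_integral y
  have hπ : Real.sqrt π ≠ 0 := (Real.sqrt_pos.mpr Real.pi_pos).ne'
  rw [erf]
  have h2 : (∫ t in (0:ℝ)..y, Real.exp (-t ^ 2))
      = Real.sqrt π / 2 - ∫ t in Set.Ioi y, Real.exp (-t ^ 2) := by linarith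
  rw [h2]
  field_simp
  ring

lemma erf_lt_one (y : ℝ) : erf y < 1 := by
  have := one_sub_erf y
  nlinarith [mul_pos c_pos (tail_pos y)]

lemma erf_tendsto : Tendsto erf atTop (nhds 1) := by
  have h := MeasureTheory.intervalIntegral_tendsto_integral_Ioi 0
    (gauss_integrableOn (Set.Ioi 0)) tendsto_id
  rw [total_integral] at h
  have h2 := h.const_mul (2 / Real.sqrt π)
  have hπ : Real.sqrt π ≠ 0 := (Real.sqrt_pos.mpr Real.pi_pos).ne'
  have : 2 / Real.sqrt π * (Real.sqrt π / 2) = 1 := by field_simp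
  rw [this] at h2
  exact h2

lemma erf_erfinv {x : ℝ} (hx : x ∈ Set.Ioo (0:ℝ) 1) : erf (erfinv x) = x := by
  obtain ⟨M, hM0, hMx⟩ : ∃ M, 0 ≤ M ∧ x < erf M := by
    have h1 : ∀ᶠ y in atTop, x < erf y := erf_tendsto.eventually (eventually_gt_nhds hx.2)
    obtain ⟨M, hM⟩ := (h1.and (eventually_ge_atTop 0)).exists
    exact ⟨M, hM.2, hM.1⟩
  have hcont : ContinuousOn erf (Set.Icc 0 M) :=
    (fun y _ => ((hasDerivAt_erf y).continuousAt.continuousWithinAt))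
  have hIVT := intermediate_value_Icc hM0 hcont
  have hxm : x ∈ Set.Icc (erf 0) (erf M) := by
    rw [erf_zero]; exact ⟨hx.1.le, hMx.le⟩
  obtain ⟨y, _, hy⟩ := hIVT hxm
  exact Function.invFun_eq ⟨y, hy⟩

lemma erfinv_pos {x : ℝ} (hx : x ∈ Set.Ioo (0:ℝ) 1) : 0 < erfinv x := by
  by_contra h
  push_neg at h
  have := erf_strictMono.monotone h
  rw [erf_erfinv hx, erf_zero] at this
  exact absurd this (not_le.mpr hx.1)

noncomputable def Hfun (g : ℝ) : ℝ :=
  (Real.sqrt π / 2 - ∫ t in (0:ℝ)..g, Real.exp (-t ^ 2))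
    - g * Real.exp (-g ^ 2) / (1 + 2 * g ^ 2)

lemma hasDerivAt_Hfun (g : ℝ) :
    HasDerivAt Hfun (-(2 * Real.exp (-g ^ 2) / (1 + 2 * g ^ 2) ^ 2)) g := by
  have hden : (1 + 2 * g ^ 2) ≠ 0 := by positivity
  have h1 : HasDerivAt (fun g : ℝ => ∫ t in (0:ℝ)..g, Real.exp (-t ^ 2))
      (Real.exp (-g ^ 2)) g := (gauss_cont.integral_hasStrictDerivAt 0 g).hasDerivAt
  have hexp : HasDerivAt (fun g : ℝ => Real.exp (-g ^ 2))
      (Real.exp (-g ^ 2) * (-(2 * g))) g := by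
    have hg : HasDerivAt (fun g : ℝ => -g ^ 2) (-(2 * g)) g := by
      exact (by simpa using (hasDerivAt_pow 2 g).neg : HasDerivAt (-fun x : ℝ => x ^ 2) (-(2 * g)) g)
    exact (Real.hasDerivAt_exp _).comp g hg
  have hnum : HasDerivAt (fun g : ℝ => g * Real.exp (-g ^ 2))
      (1 * Real.exp (-g ^ 2) + g * (Real.exp (-g ^ 2) * (-(2 * g)))) g :=
    (hasDerivAt_id g).mul hexp
  have hden' : HasDerivAt (fun g : ℝ => 1 + 2 * g ^ 2) (0 + 2 * (2 * g)) g := by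
    exact (hasDerivAt_const g 1).add (((hasDerivAt_pow 2 g).const_mul 2).congr_deriv (by ring))
  have hG : HasDerivAt (fun g : ℝ => g * Real.exp (-g ^ 2) / (1 + 2 * g ^ 2))
      (((1 * Real.exp (-g ^ 2) + g * (Real.exp (-g ^ 2) * (-(2 * g)))) * (1 + 2 * g ^ 2)
        - g * Real.exp (-g ^ 2) * (0 + 2 * (2 * g))) / (1 + 2 * g ^ 2) ^ 2) g :=
    hnum.div hden' hden
  have h := ((hasDerivAt_const g (Real.sqrt π / 2)).sub h1).sub hG
  refine h.congr_deriv (Eq.symm ?_)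
  field_simp
  ring

lemma Hfun_strictAnti : StrictAnti Hfun := by
  apply strictAnti_of_deriv_neg
  intro g
  rw [(hasDerivAt_Hfun g).deriv]
  have : (0:ℝ) < 2 * Real.exp (-g ^ 2) / (1 + 2 * g ^ 2) ^ 2 := by positivity
  linarith

lemma Hfun_tendsto : Tendsto Hfun atTop (nhds 0) := by
  have h1 : Tendsto (fun g : ℝ => Real.sqrt π / 2 - ∫ t in (0:ℝ)..g, Real.exp (-t ^ 2))
      atTop (nhds 0) := by
    have h := MeasureTheory.intervalIntegral_tendsto_integral_Ioi 0
      (gauss_integrableOn (Set.Ioi 0)) tendsto_id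
    have h2 := (tendsto_const_nhds (x := Real.sqrt π / 2) (f := atTop (α := ℝ))).sub h
    have : Real.sqrt π / 2 - ∫ t in Set.Ioi (0:ℝ), Real.exp (-t ^ 2) = 0 := by
      have := split_integral 0
      simp at this
      linarith
    rwa [this] at h2
  have h2 : Tendsto (fun g : ℝ => g * Real.exp (-g ^ 2) / (1 + 2 * g ^ 2)) atTop (nhds 0) := by
    have hub : Tendsto (fun g : ℝ => (2 * g)⁻¹) atTop (nhds 0) := by
      apply Tendsto.comp tendsto_inv_atTop_zero
      exact Tendsto.const_mul_atTop two_pos tendsto_id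
    apply tendsto_of_tendsto_of_tendsto_of_le_of_le' tendsto_const_nhds hub
    · filter_upwards [eventually_gt_atTop (0:ℝ)] with g hg
      positivity
    · filter_upwards [eventually_gt_atTop (0:ℝ)] with g hg
      rw [div_le_iff₀ (by positivity)]
      have he : Real.exp (-g ^ 2) ≤ 1 := by
        rw [Real.exp_le_one_iff]; nlinarith
      rw [inv_mul_eq_div, le_div_iff₀ (by positivity)]
      nlinarith
  have := h1.sub h2
  rw [sub_zero] at this
  exact this

lemma Hfun_pos (g : ℝ) : 0 < Hfun g := by
  have h1 : Hfun (g + 1) < Hfun g := Hfun_strictAnti (by linarith)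
  have h2 : 0 ≤ Hfun (g + 1) := by
    apply le_of_tendsto Hfun_tendsto
    filter_upwards [eventually_ge_atTop (g + 1)] with y hy
    exact Hfun_strictAnti.antitone hy
  linarith

lemma tail_gt (g : ℝ) :
    g * Real.exp (-g ^ 2) / (1 + 2 * g ^ 2) < ∫ t in Set.Ioi g, Real.exp (-t ^ 2) := by
  have h := Hfun_pos g
  have hs := split_integral g
  rw [Hfun] at h
  linarith

section D
variable (η α : ℝ)

noncomputable def Dfun (g : ℝ) : ℝ :=
  g * ((α - η) * erf g + η * (1 - α)) * Real.exp (g ^ 2)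

lemma A_pos (hη : η ∈ Set.Ioo (0:ℝ) 1) (hα : α ∈ Set.Ioo (0:ℝ) 1) {g : ℝ} (hg : 0 < g) :
    0 < (α - η) * erf g + η * (1 - α) := by
  have h0 : 0 < erf g := by rw [← erf_zero]; exact erf_strictMono hg
  have h1 : erf g < 1 := erf_lt_one g
  obtain ⟨hη0, hη1⟩ := hη
  obtain ⟨hα0, hα1⟩ := hα
  rcases le_or_gt η α with h | h
  · nlinarith
  · nlinarith

lemma hasDerivAt_Dfun (g : ℝ) :
    HasDerivAt (Dfun η α)
      (Real.exp (g ^ 2) * (((α - η) * erf g + η * (1 - α)) * (1 + 2 * g ^ 2))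
        + g * (α - η) * (2 / Real.sqrt π)) g := by
  have hA : HasDerivAt (fun g : ℝ => (α - η) * erf g + η * (1 - α))
      ((α - η) * (2 / Real.sqrt π * Real.exp (-g ^ 2))) g := by
    simpa using (((hasDerivAt_erf g).const_mul (α - η)).add_const (η * (1 - α)))
  have hgA : HasDerivAt (fun g : ℝ => g * ((α - η) * erf g + η * (1 - α)))
      (1 * ((α - η) * erf g + η * (1 - α))
        + g * ((α - η) * (2 / Real.sqrt π * Real.exp (-g ^ 2)))) g :=
    (hasDerivAt_id g).mul hA
  have hsq : HasDerivAt (fun g : ℝ => g ^ 2) (2 * g) g := by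
    simpa using hasDerivAt_pow 2 g
  have hexp2 : HasDerivAt (fun g : ℝ => Real.exp (g ^ 2)) (Real.exp (g ^ 2) * (2 * g)) g :=
    hsq.exp
  have h := hgA.mul hexp2
  have hee : Real.exp (-g ^ 2) * Real.exp (g ^ 2) = 1 := by
    rw [← Real.exp_add]; simp
  refine h.congr_deriv (Eq.symm ?_)
  linear_combination (-(g * (α - η) * (2 / Real.sqrt π))) * hee

lemma Dfun_deriv_pos (hη : η ∈ Set.Ioo (0:ℝ) 1) (hα : α ∈ Set.Ioo (0:ℝ) 1)
    {g : ℝ} (hg : 0 < g) :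
    0 < Real.exp (g ^ 2) * (((α - η) * erf g + η * (1 - α)) * (1 + 2 * g ^ 2))
        + g * (α - η) * (2 / Real.sqrt π) := by
  have hA := A_pos η α hη hα hg
  have he2 : (0:ℝ) < Real.exp (g ^ 2) := Real.exp_pos _
  have hem : (0:ℝ) < Real.exp (-g ^ 2) := Real.exp_pos _
  have hc := c_pos
  rcases le_or_gt η α with h | h
  · have h0 : 0 ≤ g * (α - η) * (2 / Real.sqrt π) :=
      mul_nonneg (mul_nonneg hg.le (by linarith)) hc.le
    nlinarith [mul_pos he2 (mul_pos hA (show (0:ℝ) < 1 + 2 * g ^ 2 by positivity))]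
  · -- α < η : need the tail bound
    have hT := tail_gt g
    have hden : (0:ℝ) < 1 + 2 * g ^ 2 := by positivity
    have hT' : g * Real.exp (-g ^ 2) < (∫ t in Set.Ioi g, Real.exp (-t ^ 2)) * (1 + 2 * g ^ 2) := by
      rw [div_lt_iff₀ hden] at hT
      linarith
    have h1 : 1 - erf g = (2 / Real.sqrt π) * ∫ t in Set.Ioi g, Real.exp (-t ^ 2) :=
      one_sub_erf g
    have he1 : Real.exp (g ^ 2) ≥ 1 := by
      rw [ge_iff_le, ← Real.exp_zero, Real.exp_le_exp]; positivity
    obtain ⟨hη0, hη1⟩ := hη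
    obtain ⟨hα0, hα1⟩ := hα
    -- A ≥ α(1-η) + (η-α)(1-erf g), and (η-α)(1-erf g)(1+2g²) > (η-α) c g exp(-g²)
    have key : ((α - η) * erf g + η * (1 - α)) * (1 + 2 * g ^ 2)
        > (η - α) * (2 / Real.sqrt π) * (g * Real.exp (-g ^ 2)) := by
      have e1 : (α - η) * erf g + η * (1 - α)
          = α * (1 - η) + (η - α) * (1 - erf g) := by ring
      rw [e1, h1]
      have h2 : (η - α) * ((2 / Real.sqrt π) * ∫ t in Set.Ioi g, Real.exp (-t ^ 2))
          * (1 + 2 * g ^ 2) > (η - α) * (2 / Real.sqrt π) * (g * Real.exp (-g ^ 2)) := by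
        have hpos : 0 < (η - α) * (2 / Real.sqrt π) := mul_pos (by linarith) hc
        nlinarith [mul_lt_mul_of_pos_left hT' hpos]
      nlinarith [h2, mul_pos (mul_pos hα0 (show (0:ℝ) < 1 - η by linarith)) hden]
    have hee : Real.exp (-g ^ 2) * Real.exp (g ^ 2) = 1 := by
      rw [← Real.exp_add]; simp
    have h3 : Real.exp (g ^ 2) * ((η - α) * (2 / Real.sqrt π) * (g * Real.exp (-g ^ 2)))
        = (η - α) * (2 / Real.sqrt π) * g := by
      linear_combination ((η - α) * (2 / Real.sqrt π) * g) * hee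
    nlinarith [mul_lt_mul_of_pos_left key he2, h3]
lemma Dfun_strictMonoOn (hη : η ∈ Set.Ioo (0:ℝ) 1) (hα : α ∈ Set.Ioo (0:ℝ) 1) :
    StrictMonoOn (Dfun η α) (Set.Ioi 0) := by
  apply strictMonoOn_of_deriv_pos (convex_Ioi 0)
  · exact fun x _ => (hasDerivAt_Dfun η α x).continuousAt.continuousWithinAt
  · intro x hx
    rw [interior_Ioi] at hx
    rw [(hasDerivAt_Dfun η α x).deriv]
    exact Dfun_deriv_pos η α hη hα hx

lemma Dfun_pos (hη : η ∈ Set.Ioo (0:ℝ) 1) (hα : α ∈ Set.Ioo (0:ℝ) 1) {g : ℝ} (hg : 0 < g) :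
    0 < Dfun η α g :=
  mul_pos (mul_pos hg (A_pos η α hη hα hg)) (Real.exp_pos _)

lemma val_eq (hη : η ∈ Set.Ioo (0:ℝ) 1) (hα : α ∈ Set.Ioo (0:ℝ) 1)
    {β : ℝ} (hβ : β ∈ Set.Ioo 0 α) :
    (1 - β) * Real.sqrt (2 / π) * Real.exp (-(erfinv ((1 - α) / (1 - β))) ^ 2) /
        ((α - η * β) * Real.sqrt 2 * erfinv ((1 - α) / (1 - β)))
      = ((1 - α) * Real.sqrt (2 / π) / Real.sqrt 2)
          / Dfun η α (erfinv ((1 - α) / (1 - β))) := by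
  obtain ⟨hη0, hη1⟩ := hη
  obtain ⟨hα0, hα1⟩ := hα
  obtain ⟨hβ0, hβα⟩ := hβ
  have hb : (0:ℝ) < 1 - β := by linarith
  have ha : (0:ℝ) < 1 - α := by linarith
  set u : ℝ := (1 - α) / (1 - β) with hu_def
  have hu : u ∈ Set.Ioo (0:ℝ) 1 := by
    constructor
    · positivity
    · rw [hu_def, div_lt_one hb]; linarith
  set g : ℝ := erfinv u with hg_def
  have hg : 0 < g := erfinv_pos hu
  have herf : erf g = u := erf_erfinv hu
  have hub : (1 - β) * u = 1 - α := by
    rw [hu_def]; field_simp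
  have hαβ : (0:ℝ) < α - η * β := by nlinarith
  have hA : (α - η * β) * u = (α - η) * u + η * (1 - α) := by
    rw [← hub]; ring
  have hee : Real.exp (-g ^ 2) * Real.exp (g ^ 2) = 1 := by
    rw [← Real.exp_add]; simp
  have hApos : 0 < (α - η) * u + η * (1 - α) := by
    rw [← herf]; exact A_pos η α ⟨hη0, hη1⟩ ⟨hα0, hα1⟩ hg
  have h2 : (0:ℝ) < Real.sqrt 2 := by positivity
  have h22 : Real.sqrt 2 * (Real.sqrt 2)⁻¹ = 1 := mul_inv_cancel₀ h2.ne'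
  have hbb : (1 - β) * (1 - β)⁻¹ = 1 := mul_inv_cancel₀ hb.ne'
  rw [Dfun, herf]
  rw [div_eq_div_iff (by positivity) (by positivity)]
  linear_combination (Real.sqrt (2/π) * g * (1 - β) * ((α - η) * u + η * (1 - α))) * hee
    + (Real.sqrt (2/π) * g * (1 - β)) * hA
    - (Real.sqrt (2/π) * g * (α - η * β)) * hub
    - ((1 - α) * Real.sqrt (2/π) * (α - η * β) * g) * h22
    + (2 * Real.sqrt (2/π) * g * (1 - α) * (α - η)) * hbb

end D

theorem xi_strictAnti (η α : ℝ) (hη : η ∈ Set.Ioo (0:ℝ) 1) (hα : α ∈ Set.Ioo (0:ℝ) 1) :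
    StrictAntiOn
      (fun β => (1 - β) * Real.sqrt (2 / π) *
          Real.exp (-(erfinv ((1 - α) / (1 - β))) ^ 2) /
        ((α - η * β) * Real.sqrt 2 * erfinv ((1 - α) / (1 - β))))
      (Set.Ioo 0 α) := by
  intro b1 hb1 b2 hb2 hlt
  have ha : (0:ℝ) < 1 - α := by linarith [hα.2]
  have hb1' : (0:ℝ) < 1 - b1 := by linarith [hb1.2, hα.2]
  have hb2' : (0:ℝ) < 1 - b2 := by linarith [hb2.2, hα.2]
  have hu1 : (1 - α) / (1 - b1) ∈ Set.Ioo (0:ℝ) 1 :=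
    ⟨by positivity, by rw [div_lt_one hb1']; linarith [hb1.2]⟩
  have hu2 : (1 - α) / (1 - b2) ∈ Set.Ioo (0:ℝ) 1 :=
    ⟨by positivity, by rw [div_lt_one hb2']; linarith [hb2.2]⟩
  have hulot : (1 - α) / (1 - b1) < (1 - α) / (1 - b2) :=
    div_lt_div_of_pos_left ha hb2' (by linarith)
  have hglt : erfinv ((1 - α) / (1 - b1)) < erfinv ((1 - α) / (1 - b2)) := by
    rw [← erf_strictMono.lt_iff_lt, erf_erfinv hu1, erf_erfinv hu2]
    exact hulot
  have hg1 : 0 < erfinv ((1 - α) / (1 - b1)) := erfinv_pos hu1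
  have hg2 : 0 < erfinv ((1 - α) / (1 - b2)) := erfinv_pos hu2
  have hD := Dfun_strictMonoOn η α hη hα hg1 hg2 hglt
  simp only
  rw [val_eq η α hη hα hb1, val_eq η α hη hα hb2]
  exact div_lt_div_of_pos_left (by positivity) (Dfun_pos η α hη hα hg1) hD
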